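/- Define g₁, g₂ : ℝ → ℝ by g₁(x) := x^{3/2} for x > 0 and g₁(x) := 0 for x ≤ 0, and g₂(x) := −x^{3/2} for x > 0 and g₂(x) := 0 for x ≤ 0, so K := {x ∈ ℝ : g₁(x) ≤ 0, g₂(x) ≤ 0} = (−∞, 0], which is closed. Let C := [0, 1], K̃ := C ∩ K = {0}, and x̄ := 0. Then: g₁ and g₂ are tangentially convex at x̄ with g₁(x̄) = g₂(x̄) = 0 and ∂_T g₁(x̄) = ∂_T g₂(x̄) = {0}; K is nearly convex at x̄; D(x̄) = ℝ ⊄ {0} = T_{K̃}(x̄), so the non-smooth Abadie constraint qualification fails at x̄; and M(x̄) = {0} while (K̃ − x̄)° = ℝ and (K − x̄)° = [0, +∞). Hence the Abadie constraint qualification cannot be omitted from the dual cone characterization M(x̄) = (K − x̄)° = (K̃ − x̄)°. -/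

import Mathlib

open Filter Set Pointwise
open scoped Topology RealInnerProductSpace

noncomputable section

variable {E : Type*} [NormedAddCommGroup E] [InnerProductSpace ℝ E]

/-- Directional derivative of `f` at `x` in direction `v`, as the limit of difference
quotients as `α → 0⁺` (defined via `limUnder`; meaningful when the limit exists). -/
noncomputable def dirDeriv (f : E → ℝ) (x v : E) : ℝ :=
  limUnder (𝓝[>] (0:ℝ)) (fun α : ℝ => (f (x + α • v) - f x) / α)

/-- `f` is tangentially convex at `x`: the directional derivative exists (and is finite)
in every direction, and `v ↦ f'(x, v)` is convex. -/
def TangentiallyConvexAt (f : E → ℝ) (x : E) : Prop :=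
  (∀ v : E, Tendsto (fun α : ℝ => (f (x + α • v) - f x) / α) (𝓝[>] (0:ℝ))
      (𝓝 (dirDeriv f x v)))
  ∧ ConvexOn ℝ Set.univ (dirDeriv f x)

/-- The tangential subdifferential `∂_T f (x)`. -/
def tangSubdiff (f : E → ℝ) (x : E) : Set E :=
  {p : E | ∀ v : E, ⟪p, v⟫ ≤ dirDeriv f x v}

/-- The polar cone `(W - x)°`. -/
def polarOf (W : Set E) (x : E) : Set E :=
  {l : E | ∀ y ∈ W, ⟪l, y - x⟫ ≤ 0}

/-- The contingent (Bouligand tangent) cone of `U` at `x`. -/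
def contingentCone (U : Set E) (x : E) : Set E :=
  {v : E | ∃ (a : ℕ → ℝ) (w : ℕ → E), (∀ k, 0 < a k) ∧
    Tendsto a atTop (𝓝 0) ∧ Tendsto w atTop (𝓝 v) ∧ ∀ k, x + a k • w k ∈ U}

/-- `V` is nearly convex at `x ∈ V`. -/
def NearlyConvexAt (V : Set E) (x : E) : Prop :=
  ∀ y ∈ V, ∃ t : ℕ → ℝ, (∀ k, 0 < t k) ∧ Tendsto t atTop (𝓝 0) ∧
    ∀ᶠ k in atTop, x + t k • (y - x) ∈ V

/-- The non-smooth linearized tangential cone `D(x)`. -/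
def linTangCone {m : ℕ} (g : Fin m → E → ℝ) (x : E) : Set E :=
  {v : E | ∀ j : Fin m, g j x = 0 → ∀ η ∈ tangSubdiff (g j) x, ⟪v, η⟫ ≤ 0}

/-- The set `M(x)` of nonnegative combinations of tangential subgradients of active
constraints. -/
def Mset {m : ℕ} (g : Fin m → E → ℝ) (x : E) : Set E :=
  {u : E | ∃ (lam : Fin m → ℝ) (η : Fin m → E),
    (∀ j, 0 ≤ lam j) ∧ (∀ j, lam j * g j x = 0) ∧
    (∀ j, η j ∈ tangSubdiff (g j) x) ∧ u = ∑ j, lam j • η j}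

/-- `w = P_W(x)`: `w` is a best approximation of `x` from `W`. -/
def IsBestApprox (W : Set E) (x w : E) : Prop :=
  w ∈ W ∧ ∀ u ∈ W, ‖x - w‖ ≤ ‖x - u‖

/-- The convex subdifferential of `h` at `x₀`. -/
def convexSubdiff (h : E → ℝ) (x₀ : E) : Set E :=
  {p : E | ∀ y : E, ⟪p, y - x₀⟫ ≤ h y - h x₀}


/-- The constraint functions of Example 3.3: `g₁(x) = x^{3/2}` for `x > 0` and `0` otherwise,
`g₂(x) = -x^{3/2}` for `x > 0` and `0` otherwise. -/
def exg17 : Fin 2 → ℝ → ℝ :=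
  ![fun x => if 0 < x then x ^ ((3 : ℝ) / 2) else 0,
    fun x => if 0 < x then -(x ^ ((3 : ℝ) / 2)) else 0]

/-- The constraint set of Example 3.3. -/
def exK17 : Set ℝ := {x | ∀ j : Fin 2, exg17 j x ≤ 0}

/-- The set `C` of Example 3.3. -/
def exC17 : Set ℝ := Set.Icc 0 1

lemma rpow_key (c v : ℝ) :
    Tendsto (fun α : ℝ => (if 0 < α * v then c * (α * v) ^ ((3:ℝ)/2) else 0) / α)
      (𝓝[>] (0:ℝ)) (𝓝 0) := by
  rcases le_or_gt v 0 with hv | hv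
  · apply Tendsto.congr' _ tendsto_const_nhds
    filter_upwards [self_mem_nhdsWithin] with α hα
    have : ¬ 0 < α * v := not_lt.2 (mul_nonpos_of_nonneg_of_nonpos (le_of_lt hα) hv)
    simp [this]
  · have h : Tendsto (fun α : ℝ => α ^ ((1:ℝ)/2)) (𝓝 (0:ℝ)) (𝓝 ((0:ℝ) ^ ((1:ℝ)/2))) :=
      (Real.continuousAt_rpow_const 0 (1/2) (Or.inr (by norm_num))).tendsto
    rw [Real.zero_rpow (by norm_num)] at h
    have h1 : Tendsto (fun α : ℝ => α ^ ((1:ℝ)/2) * (c * v ^ ((3:ℝ)/2)))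
        (𝓝[>] (0:ℝ)) (𝓝 0) := by
      simpa using (h.mono_left nhdsWithin_le_nhds).mul_const (c * v ^ ((3:ℝ)/2))
    apply Tendsto.congr' _ h1
    filter_upwards [self_mem_nhdsWithin] with α hα
    have hα : (0:ℝ) < α := hα
    have hαv : 0 < α * v := mul_pos hα hv
    have key : α ^ ((1:ℝ)/2) * α = α ^ ((3:ℝ)/2) := by
      rw [← Real.rpow_add_one hα.ne']; norm_num
    rw [if_pos hαv, eq_div_iff hα.ne', Real.mul_rpow hα.le hv.le, ← key]
    ring

lemma exg17_tendsto (j : Fin 2) (v : ℝ) :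
    Tendsto (fun α : ℝ => (exg17 j (0 + α • v) - exg17 j 0) / α) (𝓝[>] (0:ℝ)) (𝓝 0) := by
  fin_cases j
  · simpa [exg17] using rpow_key 1 v
  · simpa [exg17] using rpow_key (-1) v

lemma exg17_dd (j : Fin 2) (v : ℝ) : dirDeriv (exg17 j) 0 v = 0 :=
  (exg17_tendsto j v).limUnder_eq

lemma exg17_ts (j : Fin 2) : tangSubdiff (exg17 j) 0 = {0} := by
  ext p
  simp only [tangSubdiff, mem_setOf_eq, mem_singleton_iff, exg17_dd]
  constructor
  · intro h
    have h1 : p * p ≤ 0 := by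
      have hp : p = 0 := by simpa [RCLike.inner_apply] using h p
      rw [hp]; simp
    exact mul_self_eq_zero.mp (le_antisymm h1 (mul_self_nonneg p))
  · rintro rfl v; simp

lemma exK17_eq : exK17 = Set.Iic 0 := by
  ext x
  simp only [exK17, mem_setOf_eq, Fin.forall_fin_two, mem_Iic, exg17,
    Matrix.cons_val_zero, Matrix.cons_val_one, Matrix.head_cons]
  constructor
  · rintro ⟨h1, _⟩
    by_contra hx
    push_neg at hx
    rw [if_pos hx] at h1
    exact absurd h1 (not_le.2 (Real.rpow_pos_of_pos hx _))
  · intro hx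
    simp [not_lt.2 hx]

lemma exInter_eq : exC17 ∩ exK17 = {0} := by
  rw [exK17_eq]
  ext x
  simp only [exC17, mem_inter_iff, mem_Icc, mem_Iic, mem_singleton_iff]
  constructor
  · rintro ⟨⟨h1, _⟩, h3⟩; linarith
  · rintro rfl; norm_num


lemma exCC : contingentCone (exC17 ∩ exK17) 0 = ({0} : Set ℝ) := by
  rw [exInter_eq]
  ext v
  simp only [contingentCone, mem_setOf_eq, mem_singleton_iff]
  constructor
  · rintro ⟨a, w, hpos, _, hw, hmem⟩
    have hw0 : ∀ k, w k = 0 := by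
      intro k
      have := hmem k
      simp only [zero_add, smul_eq_mul, mem_singleton_iff, mul_eq_zero] at this
      rcases this with h | h
      · exact absurd h (hpos k).ne'
      · exact h
    have : Tendsto w atTop (𝓝 (0:ℝ)) := by
      simpa [funext hw0] using (tendsto_const_nhds : Tendsto (fun _ : ℕ => (0:ℝ)) atTop _)
    exact tendsto_nhds_unique hw this
  · rintro rfl
    exact ⟨fun k => 1 / (k + 1), fun _ => 0, fun k => by positivity,
      tendsto_one_div_add_atTop_nhds_zero_nat, tendsto_const_nhds, fun k => by simp⟩

/-- Example 3.3: with `K = (-∞, 0]`, `C = [0,1]`, `K̃ = {0}` and `x̄ = 0`,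
the constraints are tangentially convex at `x̄` with `g₁(x̄) = g₂(x̄) = 0` and
`∂_T g₁(x̄) = ∂_T g₂(x̄) = {0}`; `K` is nearly convex at `x̄`; NACQ fails at `x̄`
(`D(x̄) = ℝ ⊄ {0} = T_{K̃}(x̄)`); and `M(x̄) = {0}` while `(K̃ - x̄)° = ℝ` and
`(K - x̄)° = [0, ∞)`: NACQ cannot be omitted from Theorem 3.1. -/
theorem example_NACQ_needed :
    exK17 = Set.Iic 0 ∧ IsClosed exK17 ∧
    exC17 ∩ exK17 = {0} ∧
    (∀ j : Fin 2, TangentiallyConvexAt (exg17 j) 0) ∧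
    (∀ j : Fin 2, exg17 j 0 = 0) ∧
    tangSubdiff (exg17 0) 0 = {0} ∧
    tangSubdiff (exg17 1) 0 = {0} ∧
    NearlyConvexAt exK17 0 ∧
    linTangCone exg17 0 = Set.univ ∧
    contingentCone (exC17 ∩ exK17) 0 = {0} ∧
    ¬ linTangCone exg17 0 ⊆ contingentCone (exC17 ∩ exK17) 0 ∧
    Mset exg17 0 = {0} ∧
    polarOf (exC17 ∩ exK17) 0 = Set.univ ∧
    polarOf exK17 0 = Set.Ici 0 := by

  have hK := exK17_eq
  have hI := exInter_eq
  refine ⟨hK, by rw [hK]; exact isClosed_Iic, hI, ?_, ?_, exg17_ts 0, exg17_ts 1,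
    ?_, ?_, ?_, ?_, ?_, ?_, ?_⟩
  · -- tangentially convex
    intro j
    constructor
    · intro v; rw [exg17_dd]; exact exg17_tendsto j v
    · have : dirDeriv (exg17 j) 0 = fun _ => (0:ℝ) := funext (exg17_dd j)
      rw [this]; exact convexOn_const 0 convex_univ
  · intro j; fin_cases j <;> simp [exg17]
  · -- nearly convex
    intro y hy
    rw [hK] at hy
    refine ⟨fun k => 1 / (k + 1), fun k => by positivity,
      tendsto_one_div_add_atTop_nhds_zero_nat, ?_⟩
    filter_upwards with k
    rw [hK]
    have ht : (0:ℝ) ≤ 1 / ((k:ℝ) + 1) := by positivity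
    simp only [zero_add, sub_zero, smul_eq_mul, mem_Iic]
    exact mul_nonpos_of_nonneg_of_nonpos ht hy
  · -- linTangCone = univ
    apply eq_univ_iff_forall.mpr
    intro v j _ η hη
    rw [exg17_ts j, mem_singleton_iff] at hη
    subst hη
    simp
  · exact exCC
  · -- NACQ fails
    intro h
    have h1 : (1:ℝ) ∈ linTangCone exg17 0 := by
      intro j _ η hη
      rw [exg17_ts j, mem_singleton_iff] at hη
      subst hη; simp
    have := h h1
    rw [exCC, mem_singleton_iff] at this
    exact one_ne_zero this
  · -- Mset = {0}
    ext u
    simp only [Mset, mem_setOf_eq, mem_singleton_iff]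
    constructor
    · rintro ⟨lam, η, _, _, hη, rfl⟩
      have hη0 : ∀ j, η j = 0 := fun j => by
        have := hη j; rwa [exg17_ts j, mem_singleton_iff] at this
      simp [hη0]
    · rintro rfl
      refine ⟨fun _ => 0, fun _ => 0, fun _ => le_refl 0, fun _ => by simp, fun j => ?_, by simp⟩
      rw [exg17_ts j]; rfl
  · -- polar of {0}
    rw [hI]
    apply eq_univ_iff_forall.mpr
    intro l y hy
    rw [mem_singleton_iff] at hy
    subst hy
    simp
  · -- polar of K
    rw [hK]
    ext l
    simp only [polarOf, mem_setOf_eq, mem_Iic, mem_Ici, sub_zero, RCLike.inner_apply,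
      conj_trivial]
    constructor
    · intro h
      have := h (-1) (by norm_num)
      linarith
    · intro hl y hy
      rw [mul_comm]; exact mul_nonpos_of_nonneg_of_nonpos hl hy


end
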